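/- arXiv:1411.6308 — 2 statements merged into one kernel-verified Lean document; each statement's English description precedes it below -/
import Mathlib

section
/- Let f : (Fin n → ℝ^c) → ℝ be any function, γ ≥ 0 a real number, W : Fin n → Fin n → ℝ a nonnegative weight matrix, and g, g' : Fin n → ℝ^c families of points with g i ≠ g j whenever W i j ≠ 0. If the 'reweighted' inequality f(g') + γ · ∑_{i,j} W i j · ‖g' i − g' j‖₂² / (2‖g i − g j‖₂) ≤ f(g) + γ · ∑_{i,j} W i j · ‖g i − g j‖₂² / (2‖g i − g j‖₂) holds (with terms where W i j = 0 taken as zero), then the original objective decreases: f(g') + γ · ∑_{i,j} W i j · ‖g' i − g' j‖₂ ≤ f(g) + γ · ∑_{i,j} W i j · ‖g i − g j‖₂. -/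
open Finset

lemma key_term (Wij a x : ℝ) (hW : 0 ≤ Wij) (ha : Wij ≠ 0 → 0 < a) (hx : 0 ≤ x) :
    Wij * x - Wij * x ^ 2 / (2 * a) ≤ Wij * a - Wij * a ^ 2 / (2 * a) := by
  rcases eq_or_ne Wij 0 with h0 | h0
  · simp [h0]
  · have ha' := ha h0
    have h2a : (0:ℝ) < 2 * a := by linarith
    rw [sub_le_sub_iff]
    have e1 : Wij * x + Wij * a ^ 2 / (2 * a) =
        (Wij * x * (2 * a) + Wij * a ^ 2) / (2 * a) := by field_simp
    have e2 : Wij * a + Wij * x ^ 2 / (2 * a) =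
        (Wij * a * (2 * a) + Wij * x ^ 2) / (2 * a) := by field_simp
    rw [e1, e2, div_le_div_iff₀ h2a h2a]
    nlinarith [mul_nonneg hW (sq_nonneg (x - a))]


/-- Key step of the convergence proof (Eqs. (15)–(17) of the paper): if the next iterate `g'`
does not increase the reweighted objective
`f(G) + γ ∑_{i,j} W i j ‖Gᵢ − Gⱼ‖²/(2‖gᵢ − gⱼ‖)`, then it does not increase the true
objective `f(G) + γ ∑_{i,j} W i j ‖Gᵢ − Gⱼ‖`. -/
theorem spectral_shrunk_objective_decreases (n c : ℕ)
    (f : (Fin n → EuclideanSpace ℝ (Fin c)) → ℝ) (γ : ℝ) (hγ : 0 ≤ γ)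
    (W : Fin n → Fin n → ℝ) (hW : ∀ i j, 0 ≤ W i j)
    (g g' : Fin n → EuclideanSpace ℝ (Fin c))
    (hgz : ∀ i j, W i j ≠ 0 → g i ≠ g j)
    (h : f g' + γ * ∑ i, ∑ j, W i j * ‖g' i - g' j‖ ^ 2 / (2 * ‖g i - g j‖) ≤
         f g + γ * ∑ i, ∑ j, W i j * ‖g i - g j‖ ^ 2 / (2 * ‖g i - g j‖)) :
    f g' + γ * ∑ i, ∑ j, W i j * ‖g' i - g' j‖ ≤
      f g + γ * ∑ i, ∑ j, W i j * ‖g i - g j‖ := by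
  have key : ∑ i, ∑ j, W i j * ‖g' i - g' j‖ -
        ∑ i, ∑ j, W i j * ‖g' i - g' j‖ ^ 2 / (2 * ‖g i - g j‖) ≤
      ∑ i, ∑ j, W i j * ‖g i - g j‖ -
        ∑ i, ∑ j, W i j * ‖g i - g j‖ ^ 2 / (2 * ‖g i - g j‖) := by
    rw [← Finset.sum_sub_distrib, ← Finset.sum_sub_distrib]
    refine Finset.sum_le_sum fun i _ => ?_
    rw [← Finset.sum_sub_distrib, ← Finset.sum_sub_distrib]
    refine Finset.sum_le_sum fun j _ => ?_
    exact key_term _ _ _ (hW i j)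
      (fun h0 => norm_sub_pos_iff.mpr (hgz i j h0)) (norm_nonneg _)
  nlinarith [mul_le_mul_of_nonneg_left key hγ]
end

section
/- Let S and L̃ be real symmetric n × n matrices with S positive definite, L̃ positive semidefinite, and let γ ≥ 0. Then for any F : Matrix (Fin n) (Fin c) ℝ, the matrix G* = (S + γ L̃)⁻¹ S F is the unique minimizer over all G : Matrix (Fin n) (Fin c) ℝ of the function Q(G) = Tr((G − F)ᵀ S (G − F)) + γ · Tr(Gᵀ L̃ G); in particular S + γ L̃ is invertible and Q(G*) ≤ Q(G) for all G, with equality only when G = G*. -/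
open Matrix

/-- The smoothed Spectral Shrunk Clustering objective (Eq. (12) of the paper):
`Q(G) = Tr((G − F)ᵀ S (G − F)) + γ Tr(Gᵀ L̃ G)`. -/
noncomputable def sscQ {n c : ℕ} (S L : Matrix (Fin n) (Fin n) ℝ) (γ : ℝ)
    (F G : Matrix (Fin n) (Fin c) ℝ) : ℝ :=
  ((G - F)ᵀ * S * (G - F)).trace + γ * (Gᵀ * L * G).trace

lemma ssc_diag_eq {n c : ℕ} (A : Matrix (Fin n) (Fin n) ℝ) (D : Matrix (Fin n) (Fin c) ℝ)
    (j : Fin c) : (Dᵀ * A * D) j j = (fun i => D i j) ⬝ᵥ (A *ᵥ fun i => D i j) := by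
  simp only [Matrix.mul_apply, Matrix.transpose_apply, dotProduct, mulVec, Finset.sum_mul,
    Finset.mul_sum]
  rw [Finset.sum_comm]
  apply Finset.sum_congr rfl; intro i _
  apply Finset.sum_congr rfl; intro k _
  ring

lemma ssc_trace_nonneg {n c : ℕ} {A : Matrix (Fin n) (Fin n) ℝ} (hA : A.PosSemidef)
    (D : Matrix (Fin n) (Fin c) ℝ) : 0 ≤ (Dᵀ * A * D).trace := by
  rw [Matrix.trace]
  apply Finset.sum_nonneg
  intro j _
  rw [Matrix.diag_apply, ssc_diag_eq]
  simpa using hA.dotProduct_mulVec_nonneg (fun i => D i j)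

lemma ssc_trace_eq_zero {n c : ℕ} {A : Matrix (Fin n) (Fin n) ℝ} (hA : A.PosDef)
    (D : Matrix (Fin n) (Fin c) ℝ) (h : (Dᵀ * A * D).trace = 0) : D = 0 := by
  have hdiag : ∀ j, (Dᵀ * A * D) j j = 0 := by
    intro j
    have hnn : ∀ j ∈ Finset.univ, (0:ℝ) ≤ (Dᵀ * A * D) j j := by
      intro j _
      rw [ssc_diag_eq]
      simpa using hA.posSemidef.dotProduct_mulVec_nonneg (fun i => D i j)
    exact (Finset.sum_eq_zero_iff_of_nonneg hnn).mp h j (Finset.mem_univ j)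
  ext i j
  simp only [Matrix.zero_apply]
  by_contra hne
  have hcol : (fun i => D i j) ≠ 0 := by
    intro h0
    exact hne (by simpa using congrFun h0 i)
  have hpos := hA.dotProduct_mulVec_pos hcol
  rw [show (star fun i => D i j) = (fun i => D i j) from by simp] at hpos
  have hz := hdiag j
  rw [ssc_diag_eq] at hz
  exact absurd hz (ne_of_gt hpos)

lemma ssc_trace_symm {n c : ℕ} {S : Matrix (Fin n) (Fin n) ℝ} (hS : S.IsSymm)
    (X Y : Matrix (Fin n) (Fin c) ℝ) : (Xᵀ * S * Y).trace = (Yᵀ * S * X).trace := by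
  rw [← Matrix.trace_transpose (Xᵀ * S * Y)]
  congr 1
  rw [Matrix.transpose_mul, Matrix.transpose_mul, Matrix.transpose_transpose, hS.eq,
    Matrix.mul_assoc]

/-- For `S` positive definite, `L̃` positive semidefinite and `γ ≥ 0`, the matrix
`G* = (S + γ L̃)⁻¹ S F` (Eq. (13) of the paper) is the unique minimizer of
`Q(G) = Tr((G − F)ᵀ S (G − F)) + γ Tr(Gᵀ L̃ G)`: in particular `S + γ L̃` is invertible,
`Q(G*) ≤ Q(G)` for all `G`, with equality only when `G = G*`. -/
theorem ssc_closed_form_minimizer (n c : ℕ) (S L : Matrix (Fin n) (Fin n) ℝ)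
    (hSsymm : S.IsSymm) (hLsymm : L.IsSymm)
    (hS : S.PosDef) (hL : L.PosSemidef) (γ : ℝ) (hγ : 0 ≤ γ)
    (F : Matrix (Fin n) (Fin c) ℝ) :
    IsUnit (S + γ • L) ∧
      ∀ G : Matrix (Fin n) (Fin c) ℝ,
        sscQ S L γ F ((S + γ • L)⁻¹ * S * F) ≤ sscQ S L γ F G ∧
        (sscQ S L γ F G = sscQ S L γ F ((S + γ • L)⁻¹ * S * F) →
          G = (S + γ • L)⁻¹ * S * F) := by
  set A : Matrix (Fin n) (Fin n) ℝ := S + γ • L with hAdef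
  have hγL : (γ • L).PosSemidef := by
    refine posSemidef_iff_dotProduct_mulVec.mpr ⟨?_, fun x => ?_⟩
    · exact IsSymm.ext fun i j => by
        simp [Matrix.smul_apply]
        left
        exact congrFun (congrFun hLsymm.eq j) i ▸ rfl
    · rw [Matrix.smul_mulVec, dotProduct_smul, smul_eq_mul]
      exact mul_nonneg hγ (by simpa using hL.dotProduct_mulVec_nonneg x)
  have hA : A.PosDef := hS.add_posSemidef hγL
  have hAunit : IsUnit A := hA.isUnit
  have hAsymm : A.IsSymm := hA.isHermitian
  refine ⟨hAunit, fun G => ?_⟩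
  set G0 : Matrix (Fin n) (Fin c) ℝ := A⁻¹ * S * F with hG0def
  have hAG0 : A * G0 = S * F := by
    rw [hG0def, ← Matrix.mul_assoc, ← Matrix.mul_assoc,
      Matrix.mul_nonsing_inv A (isUnit_iff_isUnit_det A |>.mp hAunit), Matrix.one_mul]
  -- key fact: for all X, tr(Xᵀ S G0) + γ tr(Xᵀ L G0) = tr(Xᵀ S F)
  have hkey : ∀ X : Matrix (Fin n) (Fin c) ℝ,
      (Xᵀ * S * G0).trace + γ * (Xᵀ * L * G0).trace = (Xᵀ * S * F).trace := by
    intro X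
    have h1 : S * G0 + γ • (L * G0) = S * F := by
      rw [← Matrix.smul_mul, ← Matrix.add_mul]; exact hAG0
    calc (Xᵀ * S * G0).trace + γ * (Xᵀ * L * G0).trace
        = (Xᵀ * (S * G0) + γ • (Xᵀ * (L * G0))).trace := by
          rw [Matrix.trace_add, Matrix.trace_smul, smul_eq_mul, Matrix.mul_assoc,
            Matrix.mul_assoc]
      _ = (Xᵀ * (S * G0 + γ • (L * G0))).trace := by
          rw [Matrix.mul_add, Matrix.mul_smul]
      _ = (Xᵀ * S * F).trace := by rw [h1, Matrix.mul_assoc]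
  -- the fundamental identity
  have hQ : sscQ S L γ F G
      = ((G - G0)ᵀ * A * (G - G0)).trace + sscQ S L γ F G0 := by
    have e1 := ssc_trace_symm hSsymm G F
    have e2 := ssc_trace_symm hSsymm G0 F
    have e3 := ssc_trace_symm hSsymm G G0
    have e4 := ssc_trace_symm hLsymm G G0
    have k1 := hkey G
    have k2 := hkey G0
    simp only [sscQ, hAdef, Matrix.transpose_sub, Matrix.sub_mul, Matrix.mul_sub,
      Matrix.add_mul, Matrix.mul_add, Matrix.smul_mul, Matrix.mul_smul,
      Matrix.trace_sub, Matrix.trace_add, Matrix.trace_smul, smul_eq_mul]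
    linear_combination 2*k1 - 2*k2 + e1 - e2 - e3 - γ*e4
  have hQ0 : sscQ S L γ F G0
      = ((G0 - G0)ᵀ * A * (G0 - G0)).trace + sscQ S L γ F G0 := by
    simp
  constructor
  · rw [hQ]
    have := ssc_trace_nonneg hA.posSemidef (G - G0)
    linarith
  · intro heq
    rw [hQ] at heq
    have h0 : ((G - G0)ᵀ * A * (G - G0)).trace = 0 := by linarith
    have := ssc_trace_eq_zero hA (G - G0) h0
    exact sub_eq_zero.mp this
end
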